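/- arXiv:2509.08842 — 2 statements merged into one kernel-verified Lean document; each statement's English description precedes it below -/
import Mathlib

section
/- For the centered unit square Q and ζ = π/4, the set Q_{π/4} equals the closed disc centered at the origin of radius √2/2 (the circumdisc of Q). -/
open Real

abbrev E2 := EuclideanSpace ℝ (Fin 2)

def coneInt (p u : E2) (θ : ℝ) : Set E2 :=
  {x | x ≠ p ∧ Real.cos (θ / 2) * ‖x - p‖ < inner ℝ u (x - p)}

def Kzeta (K : Set E2) (ζ : ℝ) : Set E2 :=
  {p | ¬ ∃ u : E2, ‖u‖ = 1 ∧ K ⊆ coneInt p u (π - ζ)}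

/-- The centered unit square `[-1/2, 1/2]²`. -/
def Qsq : Set E2 := {x | x 0 ∈ Set.Icc (-(1/2 : ℝ)) (1/2) ∧ x 1 ∈ Set.Icc (-(1/2 : ℝ)) (1/2)}

set_option maxHeartbeats 1000000

lemma ang (c x y z0 z1 w0 w1 s t : ℝ) (hu : x^2 + y^2 = 1)
    (hc0 : 0 ≤ c) (hc2 : c^2 < 1)
    (hs0 : 0 ≤ s) (ht0 : 0 ≤ t) (hs : s^2 = z0^2 + z1^2) (ht : t^2 = w0^2 + w1^2)
    (H1 : c*s < x*z0 + y*z1) (H2 : c*t < x*w0 + y*w1) :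
    (2*c^2 - 1)*(s*t) < z0*w0 + z1*w1 := by
  obtain ⟨A, hA⟩ : ∃ A, A = x*z0 + y*z1 := ⟨_, rfl⟩
  obtain ⟨B, hB⟩ : ∃ B, B = x*z1 - y*z0 := ⟨_, rfl⟩
  obtain ⟨C, hC⟩ : ∃ C, C = x*w0 + y*w1 := ⟨_, rfl⟩
  obtain ⟨D, hD⟩ : ∃ D, D = x*w1 - y*w0 := ⟨_, rfl⟩
  rw [← hA] at H1
  rw [← hC] at H2
  have hABs : A^2 + B^2 = s^2 := by rw [hA, hB, hs]; linear_combination (z0^2 + z1^2)*hu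
  have hCDt : C^2 + D^2 = t^2 := by rw [hC, hD, ht]; linear_combination (w0^2 + w1^2)*hu
  have hs1 : 0 < s := by
    rcases hs0.lt_or_eq with h | h; · exact h
    exfalso
    have h0 : 0 < A := by rw [← h] at H1; simpa using H1
    nlinarith [mul_pos h0 h0, sq_nonneg B]
  have ht1 : 0 < t := by
    rcases ht0.lt_or_eq with h | h; · exact h
    exfalso
    have h0 : 0 < C := by rw [← h] at H2; simpa using H2
    nlinarith [mul_pos h0 h0, sq_nonneg D]
  have hcs : 0 ≤ c*s := mul_nonneg hc0 hs0
  have hct : 0 ≤ c*t := mul_nonneg hc0 ht0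
  have hc2' : 0 < 1 - c^2 := by linarith
  have hAC : c^2*(s*t) < A*C := by nlinarith [mul_pos (lt_of_le_of_lt hcs H1) (lt_of_le_of_lt hct H2)]
  have hB2 : B^2 < (1 - c^2)*s^2 := by nlinarith
  have hD2 : D^2 < (1 - c^2)*t^2 := by nlinarith
  have hK0 : 0 < (1 - c^2)*(s*t) := mul_pos hc2' (mul_pos hs1 ht1)
  have h1 : B^2*(D^2) ≤ B^2*((1 - c^2)*t^2) := mul_le_mul_of_nonneg_left hD2.le (sq_nonneg B)
  have h2 : B^2*((1 - c^2)*t^2) < ((1 - c^2)*s^2)*((1 - c^2)*t^2) :=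
    mul_lt_mul_of_pos_right hB2 (mul_pos hc2' (pow_pos ht1 2))
  have hBD2 : (B*D)^2 < ((1 - c^2)*(s*t))^2 := by nlinarith [h1, h2]
  have hBD : -((1 - c^2)*(s*t)) < B*D := by nlinarith [sq_nonneg (B*D + (1 - c^2)*(s*t))]
  have hZW : z0*w0 + z1*w1 = A*C + B*D := by
    rw [hA, hB, hC, hD]; linear_combination (-(z0*w0 + z1*w1))*hu
  rw [hZW]; nlinarith [hAC, hBD]

lemma capA (c q a b x y s t : ℝ) (hq : q^2 = 2) (hq0 : 0 < q)
    (hc : c^2 = (2 - q)/4) (hc0 : 0 ≤ c)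
    (hr : a^2 + b^2 ≤ 1/2) (ha : 1/2 < a) (hu : x^2 + y^2 = 1)
    (hs0 : 0 ≤ s) (ht0 : 0 ≤ t)
    (hs : s^2 = (1/2 - a)^2 + (1/2 - b)^2) (ht : t^2 = (1/2 - a)^2 + (-1/2 - b)^2)
    (H1 : c*s < x*(1/2 - a) + y*(1/2 - b)) (H2 : c*t < x*(1/2 - a) + y*(-1/2 - b)) :
    False := by
  have hq12 : 1 < q := by nlinarith
  have hc2 : c^2 < 1 := by nlinarith
  have key := ang c x y (1/2 - a) (1/2 - b) (1/2 - a) (-1/2 - b) s t hu hc0 hc2 hs0 ht0 hs ht H1 H2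
  -- key : (2c²-1)*(s*t) < (1/2-a)^2 + (1/2-b)*(-1/2-b)
  have hD0 : 0 < a - a^2 - b^2 := by nlinarith
  have hzw : (1/2 - a)*(1/2 - a) + (1/2 - b)*(-1/2 - b) = -(a - a^2 - b^2) := by ring
  have hgeo : s^2*t^2 ≤ 2*(a - a^2 - b^2)^2 := by
    have hid : 2*(a - a^2 - b^2)^2 - s^2*t^2
        = (a - 1/2)*(1 - 2*(a^2 + b^2)) + (a^2 + b^2 - 1/2)^2 := by
      rw [hs, ht]; ring
    nlinarith [mul_nonneg (by linarith : (0:ℝ) ≤ a - 1/2) (by linarith : (0:ℝ) ≤ 1 - 2*(a^2 + b^2)),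
      sq_nonneg (a^2 + b^2 - 1/2)]
  -- from key : D0 < (q/2)*(s*t), with 2c²-1 = -q/2
  have h2c : 2*c^2 - 1 = -(q/2) := by rw [hc]; ring
  rw [h2c, hzw] at key
  have hst : 0 ≤ s*t := mul_nonneg hs0 ht0
  -- key : -(q/2)*(s*t) < -(a - a^2 - b^2), i.e. D0 < (q/2)*(s*t)
  nlinarith [key, hgeo, hst, hD0, mul_pos hD0 hD0]

def GOOD (a b : ℝ) : Prop := ∃ x y : ℝ, x^2 + y^2 = 1 ∧
  ∀ q0 q1 : ℝ, -(1/2) ≤ q0 → q0 ≤ 1/2 → -(1/2) ≤ q1 → q1 ≤ 1/2 →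
    Real.sqrt (2 - Real.sqrt 2)/2 * Real.sqrt ((q0 - a)^2 + (q1 - b)^2)
      < x*(q0 - a) + y*(q1 - b)

lemma combine (a b x1 y1 x2 y2 : ℝ) (h1 : x1^2 + y1^2 = 1) (h2 : x2^2 + y2^2 = 1)
    (hg : x1*x2 + y1*y2 = Real.sqrt 2/2)
    (hp1 : x1*a + y1*b + (|x1| + |y1|)/2 < 0)
    (hp2 : x2*a + y2*b + (|x2| + |y2|)/2 < 0) : GOOD a b := by
  have hs2 : Real.sqrt 2^2 = 2 := sq_sqrt (by norm_num)
  have hs20 : 0 < Real.sqrt 2 := by positivity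
  have hs2lt : Real.sqrt 2 < 2 := by nlinarith
  have hm2' : (0:ℝ) ≤ 2 + Real.sqrt 2 := by linarith
  obtain ⟨m, hm⟩ : ∃ m, m = Real.sqrt (2 + Real.sqrt 2) := ⟨_, rfl⟩
  have hm2 : m^2 = 2 + Real.sqrt 2 := by rw [hm]; exact sq_sqrt hm2'
  have hm0 : 0 < m := by rw [hm]; positivity
  refine ⟨(x1 + x2)/m, (y1 + y2)/m, ?_, ?_⟩
  · have h : (x1 + x2)^2 + (y1 + y2)^2 = m^2 := by
      rw [hm2]; linear_combination h1 + h2 + 2*hg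
    field_simp
    linear_combination h
  intro q0 q1 hq0l hq0r hq1l hq1r
  obtain ⟨z0, hz0⟩ : ∃ z, z = q0 - a := ⟨_, rfl⟩
  obtain ⟨z1, hz1⟩ : ∃ z, z = q1 - b := ⟨_, rfl⟩
  obtain ⟨P, hP⟩ : ∃ P, P = x1*z0 + y1*z1 := ⟨_, rfl⟩
  obtain ⟨Q, hQ⟩ : ∃ Q, Q = x2*z0 + y2*z1 := ⟨_, rfl⟩
  obtain ⟨B1, hB1⟩ : ∃ B, B = x1*z1 - y1*z0 := ⟨_, rfl⟩
  obtain ⟨c12, hc12⟩ : ∃ c, c = x1*y2 - y1*x2 := ⟨_, rfl⟩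
  have hx1q0 : -(|x1|)/2 ≤ x1*q0 := by
    nlinarith [mul_nonneg (by linarith [neg_abs_le x1] : (0:ℝ) ≤ x1 + |x1|) (by linarith : (0:ℝ) ≤ q0 + 1/2),
      mul_nonneg (by linarith [le_abs_self x1] : (0:ℝ) ≤ |x1| - x1) (by linarith : (0:ℝ) ≤ 1/2 - q0)]
  have hy1q1 : -(|y1|)/2 ≤ y1*q1 := by
    nlinarith [mul_nonneg (by linarith [neg_abs_le y1] : (0:ℝ) ≤ y1 + |y1|) (by linarith : (0:ℝ) ≤ q1 + 1/2),
      mul_nonneg (by linarith [le_abs_self y1] : (0:ℝ) ≤ |y1| - y1) (by linarith : (0:ℝ) ≤ 1/2 - q1)]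
  have hx2q0 : -(|x2|)/2 ≤ x2*q0 := by
    nlinarith [mul_nonneg (by linarith [neg_abs_le x2] : (0:ℝ) ≤ x2 + |x2|) (by linarith : (0:ℝ) ≤ q0 + 1/2),
      mul_nonneg (by linarith [le_abs_self x2] : (0:ℝ) ≤ |x2| - x2) (by linarith : (0:ℝ) ≤ 1/2 - q0)]
  have hy2q1 : -(|y2|)/2 ≤ y2*q1 := by
    nlinarith [mul_nonneg (by linarith [neg_abs_le y2] : (0:ℝ) ≤ y2 + |y2|) (by linarith : (0:ℝ) ≤ q1 + 1/2),
      mul_nonneg (by linarith [le_abs_self y2] : (0:ℝ) ≤ |y2| - y2) (by linarith : (0:ℝ) ≤ 1/2 - q1)]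
  have hPpos : 0 < P := by
    have : P = x1*q0 + y1*q1 - (x1*a + y1*b) := by rw [hP, hz0, hz1]; ring
    rw [this]; linarith
  have hQpos : 0 < Q := by
    have : Q = x2*q0 + y2*q1 - (x2*a + y2*b) := by rw [hQ, hz0, hz1]; ring
    rw [this]; linarith
  have e1 : P^2 + B1^2 = z0^2 + z1^2 := by
    rw [hP, hB1]; linear_combination (z0^2 + z1^2)*h1
  have e2 : Q = (Real.sqrt 2/2)*P + c12*B1 := by
    rw [hP, hQ, hB1, hc12]; linear_combination (x1*z0 + y1*z1)*hg - (x2*z0 + y2*z1)*h1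
  have e3 : c12^2 = 1/2 := by
    rw [hc12]
    linear_combination (x2^2 + y2^2)*h1 + h2 - (x1*x2 + y1*y2 + Real.sqrt 2/2)*hg - (1/4)*hs2
  have hfin : (P + Q)^2 - (z0^2 + z1^2)/2 = (2 + Real.sqrt 2)*(P*Q) := by
    linear_combination (Q - (Real.sqrt 2/2)*P + c12*B1)*e2 + B1^2*e3 + (1/2)*e1 - (P^2/4)*hs2
  have hN2 : (z0^2 + z1^2)/2 < (P + Q)^2 := by
    have hpq : 0 < (2 + Real.sqrt 2)*(P*Q) := mul_pos (by linarith) (mul_pos hPpos hQpos)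
    linarith [hfin]
  -- now the square-root manipulation
  have hNnn : (0:ℝ) ≤ (q0 - a)^2 + (q1 - b)^2 := by positivity
  have hL2 : (Real.sqrt (2 - Real.sqrt 2)/2 * Real.sqrt ((q0 - a)^2 + (q1 - b)^2))^2
      = (2 - Real.sqrt 2)/4 * (z0^2 + z1^2) := by
    rw [mul_pow, div_pow, sq_sqrt (by linarith : (0:ℝ) ≤ 2 - Real.sqrt 2), sq_sqrt hNnn,
      hz0, hz1]
    ring
  have hRval : (x1 + x2)/m*(q0 - a) + (y1 + y2)/m*(q1 - b) = (P + Q)/m := by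
    rw [hP, hQ, hz0, hz1]; field_simp; ring
  rw [hRval]
  have hRpos : 0 < (P + Q)/m := div_pos (by linarith) hm0
  have hconst : (2 - Real.sqrt 2)/4*(2 + Real.sqrt 2) = 1/2 := by
    linear_combination (-(1:ℝ)/4)*hs2
  have hkey : (2 - Real.sqrt 2)/4 * (z0^2 + z1^2) < ((P + Q)/m)^2 := by
    rw [div_pow, hm2, lt_div_iff₀ (by linarith)]
    calc (2 - Real.sqrt 2)/4 * (z0^2 + z1^2) * (2 + Real.sqrt 2)
        = (2 - Real.sqrt 2)/4*(2 + Real.sqrt 2) * (z0^2 + z1^2) := by ring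
      _ = (z0^2 + z1^2)/2 := by rw [hconst]; ring
      _ < (P + Q)^2 := hN2
  have hfinal : (Real.sqrt (2 - Real.sqrt 2)/2 * Real.sqrt ((q0 - a)^2 + (q1 - b)^2))^2
      < ((P + Q)/m)^2 := by rw [hL2]; exact hkey
  exact lt_of_pow_lt_pow_left₀ 2 (le_of_lt hRpos) hfinal

lemma eq_of_sq_eq (a b : ℝ) (ha : 0 ≤ a) (hb : 0 ≤ b) (h : a^2 = b^2) : a = b := by
  have h' : (a - b)*(a + b) = 0 := by linear_combination h
  rcases mul_eq_zero.mp h' with h'' | h'' <;> linarith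

lemma good_sector (a b : ℝ) (h : 1/2 < a^2 + b^2) (hb0 : 0 ≤ b) (hba : b ≤ a) : GOOD a b := by
  have hs2 : Real.sqrt 2^2 = 2 := sq_sqrt (by norm_num)
  have hs20 : 0 < Real.sqrt 2 := by positivity
  have hs2lt : Real.sqrt 2 < 2 := by nlinarith
  have ha : 1/2 < a := by nlinarith
  obtain ⟨r, hr⟩ : ∃ r, r = Real.sqrt (a^2 + b^2) := ⟨_, rfl⟩
  have hr2 : r^2 = a^2 + b^2 := by rw [hr]; exact sq_sqrt (by positivity)
  have hr0 : 0 < r := by rw [hr]; positivity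
  have hrgt : Real.sqrt 2/2 < r := by nlinarith
  have h2b : 2*b ≤ Real.sqrt 2*r := by
    apply le_of_not_gt; intro hlt
    have hpos : 0 < 2*b + Real.sqrt 2*r := by positivity
    nlinarith [mul_pos (show (0:ℝ) < 2*b - Real.sqrt 2*r by linarith) hpos, hs2, hr2]
  have hA0 : 0 < a + Real.sqrt 2/2*r := by positivity
  have hB0 : 0 ≤ Real.sqrt 2/2*r - b := by linarith
  have hC0 : 0 < b + Real.sqrt 2/2*r := by positivity
  have hK1pos : 0 < (a + Real.sqrt 2/2*r)^2 + (b - Real.sqrt 2/2*r)^2 := by positivity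
  have hK2pos : 0 < (a + Real.sqrt 2/2*r)^2 + (b + Real.sqrt 2/2*r)^2 := by positivity
  obtain ⟨k, hk⟩ : ∃ k, k = Real.sqrt ((a + Real.sqrt 2/2*r)^2 + (b - Real.sqrt 2/2*r)^2) := ⟨_, rfl⟩
  obtain ⟨k', hk'⟩ : ∃ k, k = Real.sqrt ((a + Real.sqrt 2/2*r)^2 + (b + Real.sqrt 2/2*r)^2) := ⟨_, rfl⟩
  have hk2 : k^2 = (a + Real.sqrt 2/2*r)^2 + (b - Real.sqrt 2/2*r)^2 := by rw [hk]; exact sq_sqrt hK1pos.le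
  have hk'2 : k'^2 = (a + Real.sqrt 2/2*r)^2 + (b + Real.sqrt 2/2*r)^2 := by rw [hk']; exact sq_sqrt hK2pos.le
  have hk0 : 0 < k := by rw [hk]; exact Real.sqrt_pos.mpr hK1pos
  have hk'0 : 0 < k' := by rw [hk']; exact Real.sqrt_pos.mpr hK2pos
  refine combine a b (-((a + Real.sqrt 2/2*r)/k)) (-((b - Real.sqrt 2/2*r)/k))
      (-((a + Real.sqrt 2/2*r)/k')) (-((b + Real.sqrt 2/2*r)/k')) ?_ ?_ ?_ ?_ ?_
  · have e1 : (-((a + Real.sqrt 2/2*r)/k))^2 + (-((b - Real.sqrt 2/2*r)/k))^2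
        = ((a + Real.sqrt 2/2*r)^2 + (b - Real.sqrt 2/2*r)^2)/k^2 := by
      field_simp
    rw [e1, ← hk2]; exact div_self (ne_of_gt (pow_pos hk0 2))
  · have e1 : (-((a + Real.sqrt 2/2*r)/k'))^2 + (-((b + Real.sqrt 2/2*r)/k'))^2
        = ((a + Real.sqrt 2/2*r)^2 + (b + Real.sqrt 2/2*r)^2)/k'^2 := by
      field_simp
    rw [e1, ← hk'2]; exact div_self (ne_of_gt (pow_pos hk'0 2))
  · -- gram
    have hGval : (a + Real.sqrt 2/2*r)^2 + (b - Real.sqrt 2/2*r)*(b + Real.sqrt 2/2*r)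
        = r^2 + Real.sqrt 2*a*r := by
      linear_combination -hr2
    have hGpos : 0 ≤ r^2 + Real.sqrt 2*a*r := by positivity
    have hE : Real.sqrt 2/2*(k*k') = r^2 + Real.sqrt 2*a*r := by
      apply eq_of_sq_eq _ _ (by positivity) hGpos
      have hK1val : k^2 = 2*r^2 + Real.sqrt 2*r*(a - b) := by
        rw [hk2]; linear_combination (-1)*hr2 + (r^2/2)*hs2
      have hK2val : k'^2 = 2*r^2 + Real.sqrt 2*r*(a + b) := by
        rw [hk'2]; linear_combination (-1)*hr2 + (r^2/2)*hs2
      have hsplit : (k*k')^2 = k^2*k'^2 := by ring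
      rw [mul_pow, hsplit, hK1val, hK2val]
      linear_combination (r^2)*hr2 + (r^4 + Real.sqrt 2*a*r^3 - b^2*r^2 + (Real.sqrt 2^2 - 2)*r^2*(a^2 - b^2)/4)*hs2
    have e1 : (-((a + Real.sqrt 2/2*r)/k))*(-((a + Real.sqrt 2/2*r)/k'))
        + (-((b - Real.sqrt 2/2*r)/k))*(-((b + Real.sqrt 2/2*r)/k'))
        = ((a + Real.sqrt 2/2*r)^2 + (b - Real.sqrt 2/2*r)*(b + Real.sqrt 2/2*r))/(k*k') := by
      field_simp
    have hkk : (0:ℝ) < k*k' := mul_pos hk0 hk'0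
    rw [e1, hGval, ← hE]
    exact mul_div_cancel_right₀ _ (ne_of_gt hkk)
  · -- hp1
    have hneg1 : -((b - Real.sqrt 2/2*r)/k) = (Real.sqrt 2/2*r - b)/k := by ring
    have habs1 : |(-((a + Real.sqrt 2/2*r)/k))| = (a + Real.sqrt 2/2*r)/k := by
      rw [abs_neg, abs_of_pos (div_pos hA0 hk0)]
    have habs2 : |(-((b - Real.sqrt 2/2*r)/k))| = (Real.sqrt 2/2*r - b)/k := by
      rw [hneg1, abs_of_nonneg (div_nonneg hB0 hk0.le)]
    rw [habs1, habs2]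
    have hform : (-((a + Real.sqrt 2/2*r)/k))*a + (-((b - Real.sqrt 2/2*r)/k))*b
        + ((a + Real.sqrt 2/2*r)/k + (Real.sqrt 2/2*r - b)/k)/2
        = (-2*(a^2 + b^2) - Real.sqrt 2*r*(a - b) + (a - b) + Real.sqrt 2*r)/(2*k) := by
      field_simp; ring
    rw [hform]
    apply div_neg_of_neg_of_pos _ (by positivity)
    have t1 : 0 < r*(r - Real.sqrt 2/2) := mul_pos hr0 (by linarith)
    have t2 : 0 ≤ (a - b)*(Real.sqrt 2*(r - Real.sqrt 2/2)) :=
      mul_nonneg (by linarith) (mul_nonneg hs20.le (by linarith))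
    have hexp : -2*(a^2 + b^2) - Real.sqrt 2*r*(a - b) + (a - b) + Real.sqrt 2*r
        = -2*(r*(r - Real.sqrt 2/2)) - (a - b)*(Real.sqrt 2*(r - Real.sqrt 2/2)) := by
      linear_combination (-(a - b)/2)*hs2 + 2*hr2
    rw [hexp]; linarith
  · -- hp2
    have habs1 : |(-((a + Real.sqrt 2/2*r)/k'))| = (a + Real.sqrt 2/2*r)/k' := by
      rw [abs_neg, abs_of_pos (div_pos hA0 hk'0)]
    have habs2 : |(-((b + Real.sqrt 2/2*r)/k'))| = (b + Real.sqrt 2/2*r)/k' := by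
      rw [abs_neg, abs_of_pos (div_pos hC0 hk'0)]
    rw [habs1, habs2]
    have hform : (-((a + Real.sqrt 2/2*r)/k'))*a + (-((b + Real.sqrt 2/2*r)/k'))*b
        + ((a + Real.sqrt 2/2*r)/k' + (b + Real.sqrt 2/2*r)/k')/2
        = (-2*(a^2 + b^2) - Real.sqrt 2*r*(a + b) + (a + b) + Real.sqrt 2*r)/(2*k') := by
      field_simp; ring
    rw [hform]
    apply div_neg_of_neg_of_pos _ (by positivity)
    have t1 : 0 < r*(r - Real.sqrt 2/2) := mul_pos hr0 (by linarith)
    have t2 : 0 ≤ (a + b)*(Real.sqrt 2*(r - Real.sqrt 2/2)) :=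
      mul_nonneg (by linarith) (mul_nonneg hs20.le (by linarith))
    have hexp : -2*(a^2 + b^2) - Real.sqrt 2*r*(a + b) + (a + b) + Real.sqrt 2*r
        = -2*(r*(r - Real.sqrt 2/2)) - (a + b)*(Real.sqrt 2*(r - Real.sqrt 2/2)) := by
      linear_combination (-(a + b)/2)*hs2 + 2*hr2
    rw [hexp]; linarith

lemma good_swap (a b : ℝ) (h : GOOD a b) : GOOD b a := by
  obtain ⟨x, y, hxy, H⟩ := h
  refine ⟨y, x, by linarith, ?_⟩
  intro q0 q1 h1 h2 h3 h4
  have key := H q1 q0 h3 h4 h1 h2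
  have e : (q0 - b)^2 + (q1 - a)^2 = (q1 - a)^2 + (q0 - b)^2 := by ring
  rw [e]; linarith

lemma good_negb (a b : ℝ) (h : GOOD a b) : GOOD a (-b) := by
  obtain ⟨x, y, hxy, H⟩ := h
  refine ⟨x, -y, by linarith, ?_⟩
  intro q0 q1 h1 h2 h3 h4
  have key := H q0 (-q1) h1 h2 (by linarith) (by linarith)
  have e : (q0 - a)^2 + (q1 - -b)^2 = (q0 - a)^2 + (-q1 - b)^2 := by ring
  rw [e]; nlinarith [key]

lemma good_nega (a b : ℝ) (h : GOOD a b) : GOOD (-a) b := by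
  obtain ⟨x, y, hxy, H⟩ := h
  refine ⟨-x, y, by linarith, ?_⟩
  intro q0 q1 h1 h2 h3 h4
  have key := H (-q0) q1 (by linarith) (by linarith) h3 h4
  have e : (q0 - -a)^2 + (q1 - b)^2 = (-q0 - a)^2 + (q1 - b)^2 := by ring
  rw [e]; nlinarith [key]

lemma good_all (a b : ℝ) (h : 1/2 < a^2 + b^2) : GOOD a b := by
  have key : ∀ a b : ℝ, 0 ≤ a → 0 ≤ b → 1/2 < a^2 + b^2 → GOOD a b := by
    intro a b ha hb hab
    rcases le_total b a with hba | hba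
    · exact good_sector a b hab hb hba
    · exact good_swap b a (good_sector b a (by linarith) ha hba)
  rcases le_or_gt 0 a with ha | ha <;> rcases le_or_gt 0 b with hb | hb
  · exact key a b ha hb h
  · have := good_negb a (-b) (key a (-b) ha (by linarith) (by nlinarith))
    simpa using this
  · have := good_nega (-a) b (key (-a) b (by linarith) hb (by nlinarith))
    simpa using this
  · have h1 : GOOD (-a) (- -b) := good_negb (-a) (-b) (key (-a) (-b) (by linarith) (by linarith) (by nlinarith))
    rw [neg_neg] at h1
    have := good_nega (-a) b h1
    simpa using this

theorem stmt3 : Kzeta Qsq (π / 4) = Metric.closedBall (0 : E2) (Real.sqrt 2 / 2) := by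
  have hnorm : ∀ v : E2, ‖v‖ = Real.sqrt ((v 0)^2 + (v 1)^2) := by
    intro v
    rw [EuclideanSpace.norm_eq]
    simp [Fin.sum_univ_two, sq_abs, sq]
  have hinner : ∀ u v : E2, (inner ℝ u v : ℝ) = u 0 * v 0 + u 1 * v 1 := by
    intro u v
    simp [PiLp.inner_apply, Fin.sum_univ_two, RCLike.inner_apply, mul_comm]
  have hcosval : Real.cos ((π - π/4)/2) = Real.sqrt (2 - Real.sqrt 2)/2 := by
    rw [show (π - π/4)/2 = π/2 - π/8 by ring, Real.cos_pi_div_two_sub, Real.sin_pi_div_eight]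
  have hs2 : Real.sqrt 2^2 = 2 := sq_sqrt (by norm_num)
  have hs20 : 0 < Real.sqrt 2 := by positivity
  have hs2lt : Real.sqrt 2 < 2 := by nlinarith
  have hcval : (Real.sqrt (2 - Real.sqrt 2)/2)^2 = (2 - Real.sqrt 2)/4 := by
    rw [div_pow, sq_sqrt (by linarith : (0:ℝ) ≤ 2 - Real.sqrt 2)]
    norm_num
  have hc0 : (0:ℝ) ≤ Real.sqrt (2 - Real.sqrt 2)/2 := by positivity
  ext p
  rw [Metric.mem_closedBall, dist_zero_right]
  constructor
  · -- p ∈ Kzeta → ‖p‖ ≤ √2/2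
    intro hp
    by_contra hgt
    push_neg at hgt
    apply hp
    have hp2 : 1/2 < (p 0)^2 + (p 1)^2 := by
      rw [hnorm p] at hgt
      have h := (Real.lt_sqrt (by positivity)).mp hgt
      nlinarith [h]
    obtain ⟨x, y, hxy, H⟩ := good_all (p 0) (p 1) hp2
    refine ⟨(WithLp.equiv 2 (Fin 2 → ℝ)).symm ![x, y], ?_, ?_⟩
    · rw [hnorm]
      simp only [WithLp.equiv_symm_apply, PiLp.toLp_apply, Matrix.cons_val_zero, Matrix.cons_val_one,
        Matrix.head_cons]
      rw [hxy, Real.sqrt_one]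
    · intro v hv
      obtain ⟨hv0, hv1⟩ := hv
      rw [Set.mem_Icc] at hv0 hv1
      have key := H (v 0) (v 1) hv0.1 hv0.2 hv1.1 hv1.2
      constructor
      · intro hvp
        rw [hvp] at key
        simp at key
      · have e1 : ‖v - p‖ = Real.sqrt ((v 0 - p 0)^2 + (v 1 - p 1)^2) := by
          rw [hnorm]; simp
        have e2 : (inner ℝ ((WithLp.equiv 2 (Fin 2 → ℝ)).symm ![x, y] : E2) (v - p) : ℝ)
            = x*(v 0 - p 0) + y*(v 1 - p 1) := by
          rw [hinner]
          simp only [WithLp.equiv_symm_apply, PiLp.toLp_apply, Matrix.cons_val_zero, Matrix.cons_val_one,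
            Matrix.head_cons, PiLp.sub_apply]
        rw [hcosval, e1, e2]
        exact key
  · -- ‖p‖ ≤ √2/2 → p ∈ Kzeta
    rintro hle ⟨u, hu, hsub⟩
    by_cases hpQ : p ∈ Qsq
    · exact (hsub hpQ).1 rfl
    have hp2 : (p 0)^2 + (p 1)^2 ≤ 1/2 := by
      rw [hnorm p] at hle
      have h := Real.sqrt_le_iff.mp hle
      nlinarith [h.1, h.2]
    have hu2 : (u 0)^2 + (u 1)^2 = 1 := by
      rw [hnorm u] at hu
      have h := sq_sqrt (show (0:ℝ) ≤ (u 0)^2 + (u 1)^2 by positivity)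
      rw [hu] at h
      linarith
    have hcorner : ∀ v0 v1 : ℝ, -(1/2) ≤ v0 → v0 ≤ 1/2 → -(1/2) ≤ v1 → v1 ≤ 1/2 →
        Real.sqrt (2 - Real.sqrt 2)/2 * Real.sqrt ((v0 - p 0)^2 + (v1 - p 1)^2)
          < u 0*(v0 - p 0) + u 1*(v1 - p 1) := by
      intro v0 v1 h1 h2 h3 h4
      have hmem : ((WithLp.equiv 2 (Fin 2 → ℝ)).symm ![v0, v1] : E2) ∈ Qsq := by
        constructor <;>
          simp only [WithLp.equiv_symm_apply, PiLp.toLp_apply, Matrix.cons_val_zero, Matrix.cons_val_one,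
            Matrix.head_cons, Set.mem_Icc] <;> constructor <;> assumption
      have hc := (hsub hmem).2
      have e1 : ‖((WithLp.equiv 2 (Fin 2 → ℝ)).symm ![v0, v1] : E2) - p‖
          = Real.sqrt ((v0 - p 0)^2 + (v1 - p 1)^2) := by
        rw [hnorm]
        simp only [WithLp.equiv_symm_apply, PiLp.toLp_apply, Matrix.cons_val_zero, Matrix.cons_val_one,
          Matrix.head_cons, PiLp.sub_apply]
      have e2 : (inner ℝ u (((WithLp.equiv 2 (Fin 2 → ℝ)).symm ![v0, v1] : E2) - p) : ℝ)
          = u 0*(v0 - p 0) + u 1*(v1 - p 1) := by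
        rw [hinner]
        simp only [WithLp.equiv_symm_apply, PiLp.toLp_apply, Matrix.cons_val_zero, Matrix.cons_val_one,
          Matrix.head_cons, PiLp.sub_apply]
      rw [hcosval, e1, e2] at hc
      exact hc
    -- p not in the square: one coordinate is out of range
    have h4 : 1/2 < p 0 ∨ p 0 < -(1/2) ∨ 1/2 < p 1 ∨ p 1 < -(1/2) := by
      by_contra hcon
      push_neg at hcon
      exact hpQ ⟨Set.mem_Icc.mpr ⟨hcon.2.1, hcon.1⟩, Set.mem_Icc.mpr ⟨hcon.2.2.2, hcon.2.2.1⟩⟩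
    set c := Real.sqrt (2 - Real.sqrt 2)/2 with hcdef
    rcases h4 with hA | hB | hC | hD
    · -- 1/2 < p 0 : corners (1/2,1/2) and (1/2,-1/2)
      have H1 := hcorner (1/2) (1/2) (by norm_num) (by norm_num) (by norm_num) (by norm_num)
      have H2 := hcorner (1/2) (-(1/2)) (by norm_num) (by norm_num) (by norm_num) (by norm_num)
      exact capA c (Real.sqrt 2) (p 0) (p 1) (u 0) (u 1)
        (Real.sqrt ((1/2 - p 0)^2 + (1/2 - p 1)^2))
        (Real.sqrt ((1/2 - p 0)^2 + (-1/2 - p 1)^2))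
        hs2 hs20 hcval hc0 hp2 hA hu2 (Real.sqrt_nonneg _) (Real.sqrt_nonneg _)
        (sq_sqrt (by positivity)) (sq_sqrt (by positivity))
        (by linarith [H1]) (by linarith [H2])
    · -- p 0 < -1/2 : corners (-1/2,-1/2) and (-1/2,1/2)
      have H1 := hcorner (-(1/2)) (-(1/2)) (by norm_num) (by norm_num) (by norm_num) (by norm_num)
      have H2 := hcorner (-(1/2)) (1/2) (by norm_num) (by norm_num) (by norm_num) (by norm_num)
      have e1 : (-(1/2) - p 0)^2 + (-(1/2) - p 1)^2 = (1/2 - -(p 0))^2 + (1/2 - -(p 1))^2 := by ring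
      have e2 : (-(1/2) - p 0)^2 + (1/2 - p 1)^2 = (1/2 - -(p 0))^2 + (-1/2 - -(p 1))^2 := by ring
      rw [e1] at H1
      rw [e2] at H2
      exact capA c (Real.sqrt 2) (-(p 0)) (-(p 1)) (-(u 0)) (-(u 1))
        (Real.sqrt ((1/2 - -(p 0))^2 + (1/2 - -(p 1))^2))
        (Real.sqrt ((1/2 - -(p 0))^2 + (-1/2 - -(p 1))^2))
        hs2 hs20 hcval hc0 (by linarith [hp2]) (by linarith) (by linarith [hu2])
        (Real.sqrt_nonneg _) (Real.sqrt_nonneg _)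
        (sq_sqrt (by positivity)) (sq_sqrt (by positivity))
        (by linarith [H1]) (by linarith [H2])
    · -- 1/2 < p 1 : corners (1/2,1/2) and (-1/2,1/2) with swap
      have H1 := hcorner (1/2) (1/2) (by norm_num) (by norm_num) (by norm_num) (by norm_num)
      have H2 := hcorner (-(1/2)) (1/2) (by norm_num) (by norm_num) (by norm_num) (by norm_num)
      have e1 : (1/2 - p 0)^2 + (1/2 - p 1)^2 = (1/2 - p 1)^2 + (1/2 - p 0)^2 := by ring
      have e2 : (-(1/2) - p 0)^2 + (1/2 - p 1)^2 = (1/2 - p 1)^2 + (-1/2 - p 0)^2 := by ring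
      rw [e1] at H1
      rw [e2] at H2
      exact capA c (Real.sqrt 2) (p 1) (p 0) (u 1) (u 0)
        (Real.sqrt ((1/2 - p 1)^2 + (1/2 - p 0)^2))
        (Real.sqrt ((1/2 - p 1)^2 + (-1/2 - p 0)^2))
        hs2 hs20 hcval hc0 (by linarith) hC (by linarith)
        (Real.sqrt_nonneg _) (Real.sqrt_nonneg _)
        (sq_sqrt (by positivity)) (sq_sqrt (by positivity))
        (by linarith [H1]) (by linarith [H2])
    · -- p 1 < -1/2 : corners (-1/2,-1/2) and (1/2,-1/2), swap+neg
      have H1 := hcorner (-(1/2)) (-(1/2)) (by norm_num) (by norm_num) (by norm_num) (by norm_num)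
      have H2 := hcorner (1/2) (-(1/2)) (by norm_num) (by norm_num) (by norm_num) (by norm_num)
      have e1 : (-(1/2) - p 0)^2 + (-(1/2) - p 1)^2 = (1/2 - -(p 1))^2 + (1/2 - -(p 0))^2 := by ring
      have e2 : (1/2 - p 0)^2 + (-(1/2) - p 1)^2 = (1/2 - -(p 1))^2 + (-1/2 - -(p 0))^2 := by ring
      rw [e1] at H1
      rw [e2] at H2
      exact capA c (Real.sqrt 2) (-(p 1)) (-(p 0)) (-(u 1)) (-(u 0))
        (Real.sqrt ((1/2 - -(p 1))^2 + (1/2 - -(p 0))^2))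
        (Real.sqrt ((1/2 - -(p 1))^2 + (-1/2 - -(p 0))^2))
        hs2 hs20 hcval hc0 (by linarith [hp2]) (by linarith) (by linarith [hu2])
        (Real.sqrt_nonneg _) (Real.sqrt_nonneg _)
        (sq_sqrt (by positivity)) (sq_sqrt (by positivity))
        (by linarith [H1]) (by linarith [H2])
end

section
/- Let r ≥ 0, t ∈ ((1+r)/√2, 1+r], w = √((1+r)² − t²), x₀ = (1/√2)(1,1), x₁ = (1/√2)(−1,1), and define R₀ = {x ∈ (1+r)U : t ≤ ⟨x, x₀⟩ ≤ 1}, R₁ = {x ∈ (1+r)U : t ≤ ⟨x, x₁⟩ ≤ 1}. Then R₀ ∪ R₁ is contained in the closed disc centered at m = (1/√2)(0, t − w) with radius ρ = (t + w)/√2. -/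
open Real

lemma key12 (s t w a b : ℝ) (hs : s ^ 2 = 2) (hs0 : 0 < s)
    (ht0 : 0 < t) (hw0 : 0 ≤ w) (hwt : w ≤ t)
    (hball : a ^ 2 + b ^ 2 ≤ t ^ 2 + w ^ 2) (hline : s * t ≤ a + b) :
    a ^ 2 + (b - (t - w) / s) ^ 2 ≤ ((t + w) / s) ^ 2 := by
  have hb : t - w ≤ s * b := by
    rcases le_or_gt (s * t - b) 0 with h | h
    · nlinarith
    · have ha : s * t - b ≤ a := by linarith
      have ha2 : (s * t - b) ^ 2 ≤ a ^ 2 := by nlinarith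
      nlinarith [sq_nonneg (s * b - (t - w)), sq_nonneg (s * b - (t + w))]
  have goal' : s ^ 2 * a ^ 2 + (s * b - (t - w)) ^ 2 ≤ (t + w) ^ 2 := by nlinarith
  have hne : s ≠ 0 := ne_of_gt hs0
  calc a ^ 2 + (b - (t - w) / s) ^ 2
      = (s ^ 2 * a ^ 2 + (s * b - (t - w)) ^ 2) / s ^ 2 := by field_simp
    _ ≤ (t + w) ^ 2 / s ^ 2 := by gcongr
    _ = ((t + w) / s) ^ 2 := by rw [div_pow]

theorem stmt12 (r t w : ℝ) (hr : 0 ≤ r)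
    (ht : t ∈ Set.Ioc ((1 + r) / Real.sqrt 2) (1 + r))
    (hw : w = Real.sqrt ((1 + r) ^ 2 - t ^ 2))
    (x₀ x₁ m : E2)
    (hx₀ : x₀ = ![1 / Real.sqrt 2, 1 / Real.sqrt 2])
    (hx₁ : x₁ = ![-(1 / Real.sqrt 2), 1 / Real.sqrt 2])
    (hm : m = ![0, (t - w) / Real.sqrt 2])
    (R₀ R₁ : Set E2)
    (hR₀ : R₀ = {x ∈ Metric.closedBall (0 : E2) (1 + r) |
        t ≤ inner ℝ x x₀ ∧ inner ℝ x x₀ ≤ (1 : ℝ)})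
    (hR₁ : R₁ = {x ∈ Metric.closedBall (0 : E2) (1 + r) |
        t ≤ inner ℝ x x₁ ∧ inner ℝ x x₁ ≤ (1 : ℝ)}) :
    R₀ ∪ R₁ ⊆ Metric.closedBall m ((t + w) / Real.sqrt 2) := by
  have hs0 : (0:ℝ) < Real.sqrt 2 := by positivity
  have hs : (Real.sqrt 2) ^ 2 = 2 := Real.sq_sqrt (by norm_num)
  have ht0 : 0 < t := lt_trans (by positivity) ht.1
  have hw0 : 0 ≤ w := hw ▸ Real.sqrt_nonneg _
  have hw2 : w ^ 2 = (1 + r) ^ 2 - t ^ 2 := by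
    rw [hw]; exact Real.sq_sqrt (by nlinarith [ht.2])
  have hlt : 1 + r < Real.sqrt 2 * t := by
    have := ht.1
    rw [div_lt_iff₀ hs0] at this
    linarith
  have hwt : w ≤ t := by nlinarith
  have hball2 : t ^ 2 + w ^ 2 = (1 + r) ^ 2 := by linarith
  intro x hx
  set a := x 0 with ha
  set b := x 1 with hb
  have hx2 : x ∈ Metric.closedBall (0 : E2) (1 + r) := by
    rcases hx with h | h
    · exact (hR₀ ▸ h).1
    · exact (hR₁ ▸ h).1
  have hball : a ^ 2 + b ^ 2 ≤ t ^ 2 + w ^ 2 := by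
    rw [Metric.mem_closedBall, EuclideanSpace.dist_eq] at hx2
    simp only [Fin.sum_univ_two, Real.dist_eq, PiLp.zero_apply, Pi.zero_apply,
      sub_zero, sq_abs] at hx2
    have h0 : (0:ℝ) ≤ a ^ 2 + b ^ 2 := by positivity
    nlinarith [Real.sq_sqrt h0, Real.sqrt_nonneg (a ^ 2 + b ^ 2), hx2]
  have hline : Real.sqrt 2 * t ≤ a + b ∨ Real.sqrt 2 * t ≤ -a + b := by
    rcases hx with h | h
    · left
      have h2 := (hR₀ ▸ h).2.1
      simp only [PiLp.inner_apply] at h2; rw [hx₀] at h2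
      simp only [PiLp.inner_apply, RCLike.inner_apply, conj_trivial, Fin.sum_univ_two,
        Matrix.cons_val_zero, Matrix.cons_val_one, Matrix.head_cons] at h2
      have : t ≤ (a + b) / Real.sqrt 2 := by
        rw [add_div]
        convert h2 using 2 <;> ring
      rw [le_div_iff₀ hs0] at this
      linarith
    · right
      have h2 := (hR₁ ▸ h).2.1
      simp only [PiLp.inner_apply] at h2; rw [hx₁] at h2
      simp only [PiLp.inner_apply, RCLike.inner_apply, conj_trivial, Fin.sum_univ_two,
        Matrix.cons_val_zero, Matrix.cons_val_one, Matrix.head_cons] at h2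
      have : t ≤ (-a + b) / Real.sqrt 2 := by
        rw [add_div]
        convert h2 using 2 <;> ring
      rw [le_div_iff₀ hs0] at this
      linarith
  have hkey : a ^ 2 + (b - (t - w) / Real.sqrt 2) ^ 2 ≤ ((t + w) / Real.sqrt 2) ^ 2 := by
    rcases hline with h | h
    · exact key12 _ t w a b hs hs0 ht0 hw0 hwt hball h
    · have := key12 _ t w (-a) b hs hs0 ht0 hw0 hwt (by nlinarith) h
      simpa using this
  rw [Metric.mem_closedBall, EuclideanSpace.dist_eq, hm]
  simp only [Fin.sum_univ_two, Real.dist_eq, Matrix.cons_val_zero, Matrix.cons_val_one,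
    Matrix.head_cons, sub_zero]
  have habs : |a| ^ 2 + |b - (t - w) / Real.sqrt 2| ^ 2
      = a ^ 2 + (b - (t - w) / Real.sqrt 2) ^ 2 := by rw [sq_abs, sq_abs]
  calc Real.sqrt (|a| ^ 2 + |b - (t - w) / Real.sqrt 2| ^ 2)
      ≤ Real.sqrt (((t + w) / Real.sqrt 2) ^ 2) := by
        apply Real.sqrt_le_sqrt; rw [habs]; exact hkey
    _ = (t + w) / Real.sqrt 2 := Real.sqrt_sq (by positivity)
end
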